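/- Let p_A be a random p-value (random through a data-splitting mechanism A given the data) such that, for an event {Data_A ∈ 𝒜} with P(Data_A ∈ 𝒜) ≥ 1 - γ, one has |P(p_A ≤ x | Data_A ∈ 𝒜) - x| ≤ δ for all x ∈ [0,1]. Define p_{.5} = lower median of p_A conditional on the data. Then under the null hypothesis, P(p_{.5} ≤ α/2) ≤ α + 2(δ + γ). -/

import Mathlib

open scoped ENNReal
open MeasureTheory ProbabilityTheory

/-- Lower median of `f` under the measure `ν`. -/
noncomputable def lMed {A : Type*} [MeasurableSpace A] (ν : Measure A) (f : A → ℝ) : ℝ :=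
  sInf {x : ℝ | (1 : ℝ≥0∞) / 2 ≤ ν {a | f a ≤ x}}

/-- Uniform validity of the variational p-value: if the split-dependent p-value is
approximately uniform conditional on a regular event of probability at least `1 - γ`,
then the data-wise lower median p-value satisfies
`P(p_{.5} ≤ α/2) ≤ α + 2(δ + γ)`. -/
theorem stmt9 {Ω A : Type*} [MeasurableSpace Ω] [MeasurableSpace A]
    (μ : Measure Ω) (ν : Measure A) [IsProbabilityMeasure μ] [IsProbabilityMeasure ν]
    (pval : Ω × A → ℝ) (hpval : Measurable pval)
    (hp01 : ∀ q, pval q ∈ Set.Icc (0 : ℝ) 1)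
    (E : Set (Ω × A)) (hE : MeasurableSet E)
    (γ δ α : ℝ) (hγ : 0 ≤ γ) (hδ : 0 ≤ δ) (hα : 0 ≤ α)
    (hEprob : 1 - γ ≤ ((μ.prod ν) E).toReal)
    (hunif : ∀ x ∈ Set.Icc (0 : ℝ) 1,
      |(((μ.prod ν)[|E]) {q | pval q ≤ x}).toReal - x| ≤ δ) :
    μ {ω | lMed ν (fun a => pval (ω, a)) ≤ α / 2} ≤ ENNReal.ofReal (α + 2 * (δ + γ)) := by
  set P := μ.prod ν with hP
  by_cases hbig : 1 ≤ α + 2 * (δ + γ)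
  · calc μ {ω | lMed ν (fun a => pval (ω, a)) ≤ α / 2} ≤ 1 := prob_le_one
      _ ≤ ENNReal.ofReal (α + 2 * (δ + γ)) := by
        rw [← ENNReal.ofReal_one]; exact ENNReal.ofReal_le_ofReal hbig
  push_neg at hbig
  have hγ1 : γ < 1 := by linarith
  have hα1 : α < 1 := by linarith
  -- the "p ≤ α/2" event
  set T : Set (Ω × A) := {q | pval q ≤ α / 2} with hTdef
  have hT : MeasurableSet T := measurableSet_le hpval measurable_const
  have hPEfin : P E ≠ ⊤ := measure_ne_top _ _
  have hPE0 : P E ≠ 0 := by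
    intro h0
    rw [h0] at hEprob
    simp at hEprob
    linarith
  -- step 1: conditional bound
  have hcond : P[|E] T ≤ ENNReal.ofReal (α / 2 + δ) := by
    haveI := cond_isProbabilityMeasure (μ := P) hPE0
    have hfin : P[|E] T ≠ ⊤ := measure_ne_top _ _
    rw [ENNReal.le_ofReal_iff_toReal_le hfin (by linarith)]
    have := hunif (α / 2) ⟨by linarith, by linarith⟩
    rw [abs_le] at this
    linarith [this.2]
  -- step 2: P (E ∩ T) ≤ conditional probability
  have hkey : P (E ∩ T) = P E * P[|E] T := by
    rw [cond_apply hE, ← mul_assoc, ENNReal.mul_inv_cancel hPE0 hPEfin, one_mul]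
  have hstep2 : P (E ∩ T) ≤ ENNReal.ofReal (α / 2 + δ) := by
    calc P (E ∩ T) = P E * P[|E] T := hkey
      _ ≤ 1 * P[|E] T := by gcongr; exact prob_le_one
      _ = P[|E] T := one_mul _
      _ ≤ _ := hcond
  -- step 3: P Eᶜ ≤ γ
  have hstep3 : P Eᶜ ≤ ENNReal.ofReal γ := by
    have h1 : ENNReal.ofReal (1 - γ) ≤ P E := ENNReal.ofReal_le_of_le_toReal hEprob
    have hcompl : P Eᶜ = 1 - P E := prob_compl_eq_one_sub hE
    rw [hcompl, tsub_le_iff_right]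
    calc (1 : ℝ≥0∞) = ENNReal.ofReal (γ + (1 - γ)) := by norm_num
      _ = ENNReal.ofReal γ + ENNReal.ofReal (1 - γ) := ENNReal.ofReal_add hγ (by linarith)
      _ ≤ ENNReal.ofReal γ + P E := by gcongr
  -- step 4: Markov / median argument
  set S₀ : Set Ω := {ω | (1 : ℝ≥0∞) / 2 ≤ ν (Prod.mk ω ⁻¹' T)} with hS₀def
  have hS₀m : MeasurableSet S₀ :=
    measurableSet_le measurable_const (measurable_measure_prodMk_left hT)
  have hsub : {ω | lMed ν (fun a => pval (ω, a)) ≤ α / 2} ⊆ S₀ := by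
    intro ω hω
    simp only [Set.mem_setOf_eq] at hω
    set f : A → ℝ := fun a => pval (ω, a) with hf
    have hfm : Measurable f := hpval.comp measurable_prodMk_left
    have hM : ∀ y : ℝ, α / 2 < y → (1 : ℝ≥0∞) / 2 ≤ ν {a | f a ≤ y} := by
      intro y hy
      have hne : Set.Nonempty {x : ℝ | (1 : ℝ≥0∞) / 2 ≤ ν {a | f a ≤ x}} := by
        refine ⟨1, ?_⟩
        have huniv : {a | f a ≤ 1} = Set.univ :=
          Set.eq_univ_of_forall fun a => (hp01 (ω, a)).2
        simp only [Set.mem_setOf_eq, huniv, measure_univ]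
        exact ENNReal.half_le_self
      have hlt : sInf {x : ℝ | (1 : ℝ≥0∞) / 2 ≤ ν {a | f a ≤ x}} < y :=
        lt_of_le_of_lt hω hy
      have hbdd : BddBelow {x : ℝ | (1 : ℝ≥0∞) / 2 ≤ ν {a | f a ≤ x}} := by
        refine ⟨0, fun x hx => ?_⟩
        by_contra hx0
        push_neg at hx0
        have hempty : {a | f a ≤ x} = ∅ := by
          ext a
          simp only [Set.mem_setOf_eq, Set.mem_empty_iff_false, iff_false, not_le]
          exact lt_of_lt_of_le hx0 (hp01 (ω, a)).1
        simp only [Set.mem_setOf_eq, hempty, measure_empty, nonpos_iff_eq_zero] at hx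
        exact (by norm_num : (1 : ℝ≥0∞) / 2 ≠ 0) hx
      obtain ⟨x, hx, hxy⟩ := (csInf_lt_iff hbdd hne).1 hlt
      exact hx.trans (measure_mono fun a ha => le_trans ha hxy.le)
    have hiInter : {a | f a ≤ α / 2} = ⋂ n : ℕ, {a | f a ≤ α / 2 + 1 / (n + 1)} := by
      ext a
      simp only [Set.mem_iInter, Set.mem_setOf_eq]
      constructor
      · intro h n
        have : (0 : ℝ) < 1 / (n + 1) := by positivity
        linarith
      · intro h
        by_contra hcon
        push_neg at hcon
        obtain ⟨n, hn⟩ := exists_nat_one_div_lt (sub_pos.2 hcon)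
        have := h n
        linarith
    have hanti : Antitone fun n : ℕ => {a | f a ≤ α / 2 + 1 / (n + 1)} := by
      intro n m hnm a ha
      simp only [Set.mem_setOf_eq] at ha ⊢
      have : (1 : ℝ) / (m + 1) ≤ 1 / (n + 1) := by
        apply one_div_le_one_div_of_le (by positivity)
        exact_mod_cast Nat.succ_le_succ hnm
      linarith
    have hdir : Directed (· ⊇ ·) fun n : ℕ => {a | f a ≤ α / 2 + 1 / (n + 1)} :=
      hanti.directed_ge
    have hmeas : ∀ n : ℕ, NullMeasurableSet {a | f a ≤ α / 2 + 1 / (n + 1)} ν := fun n =>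
      (measurableSet_le hfm measurable_const).nullMeasurableSet
    have : ν {a | f a ≤ α / 2} = ⨅ n : ℕ, ν {a | f a ≤ α / 2 + 1 / (n + 1)} := by
      rw [hiInter]
      exact Directed.measure_iInter hmeas hdir ⟨0, measure_ne_top _ _⟩
    have hhalf : (1 : ℝ≥0∞) / 2 ≤ ν {a | f a ≤ α / 2} := by
      rw [this]
      exact le_iInf fun n => hM _ (by
        have : (0 : ℝ) < 1 / (n + 1) := by positivity
        linarith)
    exact hhalf
  have hmark : (1 : ℝ≥0∞) / 2 * μ S₀ ≤ P T := by
    rw [hP, Measure.prod_apply hT]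
    calc (1 : ℝ≥0∞) / 2 * μ S₀ = ∫⁻ ω, S₀.indicator (fun _ => (1 : ℝ≥0∞) / 2) ω ∂μ := by
          rw [lintegral_indicator hS₀m, setLIntegral_const, mul_comm]
      _ ≤ ∫⁻ ω, ν (Prod.mk ω ⁻¹' T) ∂μ := by
          apply lintegral_mono
          intro ω
          by_cases hω : ω ∈ S₀
          · rw [Set.indicator_of_mem hω]; exact hω
          · rw [Set.indicator_of_notMem hω]; exact zero_le
  -- combine
  have hPT : P T ≤ ENNReal.ofReal (α / 2 + δ + γ) := by
    calc P T ≤ P ((E ∩ T) ∪ Eᶜ) := measure_mono (by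
          intro q hq
          by_cases hqE : q ∈ E
          · exact Or.inl ⟨hqE, hq⟩
          · exact Or.inr hqE)
      _ ≤ P (E ∩ T) + P Eᶜ := measure_union_le _ _
      _ ≤ ENNReal.ofReal (α / 2 + δ) + ENNReal.ofReal γ := add_le_add hstep2 hstep3
      _ = ENNReal.ofReal (α / 2 + δ + γ) := (ENNReal.ofReal_add (by linarith) hγ).symm
  calc μ {ω | lMed ν (fun a => pval (ω, a)) ≤ α / 2} ≤ μ S₀ := measure_mono hsub
    _ = 2 * ((1 : ℝ≥0∞) / 2 * μ S₀) := by
        rw [← mul_assoc, one_div, ENNReal.mul_inv_cancel two_ne_zero ENNReal.ofNat_ne_top, one_mul]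
    _ ≤ 2 * P T := by gcongr
    _ ≤ 2 * ENNReal.ofReal (α / 2 + δ + γ) := by gcongr
    _ = ENNReal.ofReal (2 * (α / 2 + δ + γ)) := by
        rw [ENNReal.ofReal_mul (by norm_num)]
        norm_num
    _ = ENNReal.ofReal (α + 2 * (δ + γ)) := by ring_nf
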